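/- Functional progress with cubic step-size and cut negative spectrum: let f : E → ℝ be twice continuously differentiable with L-Lipschitz-continuous Hessian (L > 0). Fix x ∈ E and suppose ∇²f(x) = A₊ − A₋, where A₊ and A₋ are symmetric positive semidefinite linear maps. Let H be a symmetric positive semidefinite linear map with ‖A₊ − H‖ ≤ β for some β ≥ 0, let η ≥ β, and let x⁺ ∈ E satisfy ∇f(x) + (H + αI)(x⁺ − x) = 0 with α = (L/2)·r + η, where r := ‖x⁺ − x‖. Then f(x) − f(x⁺) ≥ (L/3)·r³ + (η/2)·r². -/

import Mathlib

open scoped RealInnerProductSpace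
open Real Set

def IsSymmPSD {n : ℕ} (H : EuclideanSpace ℝ (Fin n) →L[ℝ] EuclideanSpace ℝ (Fin n)) : Prop :=
  (∀ u v, ⟪H u, v⟫ = ⟪u, H v⟫) ∧ ∀ u, 0 ≤ ⟪H u, u⟫

noncomputable def hess {n : ℕ} (f : EuclideanSpace ℝ (Fin n) → ℝ)
    (x : EuclideanSpace ℝ (Fin n)) :
    EuclideanSpace ℝ (Fin n) →L[ℝ] EuclideanSpace ℝ (Fin n) :=
  fderiv ℝ (gradient f) x

lemma taylor_two_bound {n : ℕ} (f : EuclideanSpace ℝ (Fin n) → ℝ) (hf : ContDiff ℝ 2 f)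
    (L : ℝ) (hL : 0 ≤ L)
    (hLip : ∀ x y, ‖hess f x - hess f y‖ ≤ L * ‖x - y‖)
    (x s : EuclideanSpace ℝ (Fin n)) :
    f (x + s) ≤ f x + ⟪gradient f x, s⟫ + 1/2 * ⟪hess f x s, s⟫ + L/6 * ‖s‖^3 := by
  have hgrad : ContDiff ℝ 1 (gradient f) := by
    have h : gradient f = fun y =>
        (InnerProductSpace.toDual ℝ (EuclideanSpace ℝ (Fin n))).symm (fderiv ℝ f y) := rfl
    rw [h]
    exact (InnerProductSpace.toDual ℝ _).symm.contDiff.comp (hf.fderiv_right (by norm_num))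
  have hgd : Differentiable ℝ (gradient f) := hgrad.differentiable one_ne_zero
  have hfd : Differentiable ℝ f := hf.differentiable (by norm_num)
  set y : ℝ → EuclideanSpace ℝ (Fin n) := fun t => x + t • s with hy
  have hyd : ∀ t : ℝ, HasDerivAt y s t := fun t => by
    simpa [hy] using ((hasDerivAt_id t).smul_const s).const_add x
  have hy0 : y 0 = x := by simp [hy]
  have hg : ∀ t : ℝ, HasDerivAt (fun t => gradient f (y t)) (hess f (y t) s) t := fun t => by
    have := ((hgd (y t)).hasFDerivAt).comp_hasDerivAt t (hyd t)
    simpa [Function.comp_def, hess] using this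
  have hφ : ∀ t : ℝ, HasDerivAt (fun t => f (y t)) ⟪gradient f (y t), s⟫ t := fun t => by
    have := ((hfd (y t)).hasGradientAt.hasFDerivAt).comp_hasDerivAt t (hyd t)
    simpa [Function.comp_def] using this
  -- first-order bound on the gradient increment
  set G : ℝ → EuclideanSpace ℝ (Fin n) :=
    fun t => gradient f (y t) - gradient f x - t • (hess f x s) with hGdef
  have hG : ∀ t : ℝ, HasDerivAt G (hess f (y t) s - hess f x s) t := fun t => by
    have := ((hg t).sub_const (gradient f x)).sub ((hasDerivAt_id t).smul_const (hess f x s))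
    simpa [hGdef, Pi.sub_def] using this
  have hGb : ∀ t ∈ Icc (0:ℝ) 1, ‖G t‖ ≤ L * ‖s‖^2 * (t^2/2) := by
    have hB : ∀ t : ℝ, HasDerivAt (fun t => L * ‖s‖^2 * (t^2/2)) (L * ‖s‖^2 * t) t := by
      intro t
      have h1 : HasDerivAt (fun t : ℝ => t^2/2) t t := by
        simpa using (hasDerivAt_pow 2 t).div_const 2
      simpa using h1.const_mul (L * ‖s‖^2)
    refine image_norm_le_of_norm_deriv_right_le_deriv_boundary
      (fun t _ => (hG t).continuousAt.continuousWithinAt)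
      (fun t _ => (hG t).hasDerivWithinAt) ?_ hB ?_
    · simp [hGdef, hy0]
    · intro t ht
      have h1 : ‖hess f (y t) s - hess f x s‖ = ‖(hess f (y t) - hess f x) s‖ := by
        simp
      have h2 : ‖(hess f (y t) - hess f x) s‖ ≤ ‖hess f (y t) - hess f x‖ * ‖s‖ :=
        (hess f (y t) - hess f x).le_opNorm s
      have h3 : ‖hess f (y t) - hess f x‖ ≤ L * ‖y t - x‖ := hLip (y t) x
      have h4 : ‖y t - x‖ = t * ‖s‖ := by
        simp [hy, norm_smul, abs_of_nonneg ht.1]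
      calc ‖hess f (y t) s - hess f x s‖ ≤ L * ‖y t - x‖ * ‖s‖ := by
            rw [h1]; exact h2.trans (mul_le_mul_of_nonneg_right h3 (norm_nonneg s))
        _ = L * ‖s‖^2 * t := by rw [h4]; ring
  -- second-order bound on f
  set ψ : ℝ → ℝ := fun t => f (y t) - f x - t * ⟪gradient f x, s⟫
      - t^2/2 * ⟪hess f x s, s⟫ - L/6 * ‖s‖^3 * t^3 with hψdef
  have hψ : ∀ t : ℝ, HasDerivAt ψ
      (⟪gradient f (y t), s⟫ - ⟪gradient f x, s⟫ - t * ⟪hess f x s, s⟫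
        - L/2 * ‖s‖^3 * t^2) t := by
    intro t
    have h1 : HasDerivAt (fun t : ℝ => t * ⟪gradient f x, s⟫) ⟪gradient f x, s⟫ t := by
      simpa using (hasDerivAt_id t).mul_const (⟪gradient f x, s⟫)
    have h2 : HasDerivAt (fun t : ℝ => t^2/2 * ⟪hess f x s, s⟫) (t * ⟪hess f x s, s⟫) t := by
      simpa using ((hasDerivAt_pow 2 t).div_const 2).mul_const (⟪hess f x s, s⟫)
    have h3 : HasDerivAt (fun t : ℝ => L/6 * ‖s‖^3 * t^3) (L/2 * ‖s‖^3 * t^2) t := by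
      have := (hasDerivAt_pow 3 t).const_mul (L/6 * ‖s‖^3)
      refine this.congr_deriv ?_
      push_cast; ring
    simpa [hψdef, Pi.sub_def] using (((((hφ t).sub_const (f x)).sub h1).sub h2).sub h3)
  have hψ10 : ψ 1 ≤ ψ 0 := by
    have hanti : AntitoneOn ψ (Icc (0:ℝ) 1) := by
      refine antitoneOn_of_deriv_nonpos (convex_Icc 0 1)
        (fun t _ => (hψ t).continuousAt.continuousWithinAt)
        (fun t ht => ((hψ t).differentiableAt).differentiableWithinAt) ?_
      intro t ht
      rw [interior_Icc] at ht
      rw [(hψ t).deriv]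
      have hGt : ⟪G t, s⟫ = ⟪gradient f (y t), s⟫ - ⟪gradient f x, s⟫
          - t * ⟪hess f x s, s⟫ := by
        simp only [hGdef, inner_sub_left, real_inner_smul_left]
      have hle : ⟪G t, s⟫ ≤ L/2 * ‖s‖^3 * t^2 := by
        calc ⟪G t, s⟫ ≤ ‖G t‖ * ‖s‖ := real_inner_le_norm _ _
          _ ≤ L * ‖s‖^2 * (t^2/2) * ‖s‖ :=
            mul_le_mul_of_nonneg_right (hGb t ⟨ht.1.le, ht.2.le⟩) (norm_nonneg s)
          _ = L/2 * ‖s‖^3 * t^2 := by ring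
      rw [hGt] at hle
      linarith
    exact hanti ⟨le_rfl, zero_le_one⟩ ⟨zero_le_one, le_rfl⟩ zero_le_one
  have hψ0 : ψ 0 = 0 := by simp [hψdef, hy0]
  have hψ1 : ψ 1 = f (x + s) - f x - ⟪gradient f x, s⟫ - 1/2 * ⟪hess f x s, s⟫
      - L/6 * ‖s‖^3 := by
    simp only [hψdef, hy, one_smul, one_pow, one_mul]
    ring
  rw [hψ0, hψ1] at hψ10
  linarith

/-- Functional progress with cubic step-size and cut negative spectrum: if
`∇²f(x) = A₊ − A₋` with `A₊, A₋` symmetric PSD, `‖A₊ − H‖ ≤ β ≤ η`, and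
`∇f(x) + (H + αI)(x⁺ − x) = 0` with `α = (L/2)r + η` and `r = ‖x⁺ − x‖`, then
`f(x) − f(x⁺) ≥ (L/3)r³ + (η/2)r²`. -/
theorem cubic_step_functional_progress {n : ℕ}
    (f : EuclideanSpace ℝ (Fin n) → ℝ) (hf : ContDiff ℝ 2 f)
    (L : ℝ) (hL : 0 < L)
    (hLip : ∀ x y, ‖hess f x - hess f y‖ ≤ L * ‖x - y‖)
    (x xp : EuclideanSpace ℝ (Fin n))
    (Ap Am H : EuclideanSpace ℝ (Fin n) →L[ℝ] EuclideanSpace ℝ (Fin n))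
    (hAp : IsSymmPSD Ap) (hAm : IsSymmPSD Am)
    (hdecomp : hess f x = Ap - Am)
    (hH : IsSymmPSD H)
    (β : ℝ) (hβ : 0 ≤ β) (hHerr : ‖Ap - H‖ ≤ β)
    (η : ℝ) (hη : β ≤ η)
    (α : ℝ) (hα : α = L / 2 * ‖xp - x‖ + η)
    (hstep : gradient f x + H (xp - x) + α • (xp - x) = 0) :
    L / 3 * ‖xp - x‖ ^ 3 + η / 2 * ‖xp - x‖ ^ 2 ≤ f x - f xp := by
  set s := xp - x with hs
  have hxs : x + s = xp := by simp [hs]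
  have htaylor := taylor_two_bound f hf L hL.le hLip x s
  rw [hxs] at htaylor
  set r := ‖s‖ with hr
  have hr0 : 0 ≤ r := norm_nonneg s
  -- inner product of the step equation with s
  have h1 : ⟪gradient f x, s⟫ = -⟪H s, s⟫ - α * r^2 := by
    have hg : gradient f x = -(H s + α • s) := by
      rw [← add_eq_zero_iff_eq_neg, ← add_assoc]
      exact hstep
    rw [hg, inner_neg_left, inner_add_left, real_inner_smul_left, real_inner_self_eq_norm_sq]
    ring
  -- Hessian quadratic form bound
  have h2 : ⟪hess f x s, s⟫ ≤ ⟪H s, s⟫ + β * r^2 := by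
    have hAm0 : 0 ≤ ⟪Am s, s⟫ := hAm.2 s
    have hApH : ⟪Ap s, s⟫ - ⟪H s, s⟫ ≤ β * r^2 := by
      have e1 : ⟪Ap s, s⟫ - ⟪H s, s⟫ = ⟪(Ap - H) s, s⟫ := by
        simp [inner_sub_left]
      have e2 : ⟪(Ap - H) s, s⟫ ≤ ‖(Ap - H) s‖ * ‖s‖ := real_inner_le_norm _ _
      have e3 : ‖(Ap - H) s‖ ≤ ‖Ap - H‖ * ‖s‖ := (Ap - H).le_opNorm s
      have e4 : ‖Ap - H‖ * ‖s‖ * ‖s‖ ≤ β * ‖s‖ * ‖s‖ := by gcongr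
      rw [e1]
      calc ⟪(Ap - H) s, s⟫ ≤ ‖Ap - H‖ * ‖s‖ * ‖s‖ :=
            e2.trans (mul_le_mul_of_nonneg_right e3 (norm_nonneg s))
        _ ≤ β * ‖s‖ * ‖s‖ := e4
        _ = β * r^2 := by rw [hr]; ring
    have hQ : ⟪hess f x s, s⟫ = ⟪Ap s, s⟫ - ⟪Am s, s⟫ := by
      rw [hdecomp]; simp [inner_sub_left]
    linarith
  have h3 : 0 ≤ ⟪H s, s⟫ := hH.2 s
  rw [hα] at h1
  nlinarith [mul_nonneg (sub_nonneg.2 hη) (sq_nonneg r), sq_nonneg r, hr0]
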